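/- Let (X, ≼) be a partially ordered set, x₁,…,xₙ ∈ X and y₁,…,yₙ ∈ ℝ. Let 𝒜 be the collection of subsets A ⊆ {1,…,n} such that i ∈ A and xᵢ ≼ xⱼ imply j ∈ A (the admissible upper sets). For each i ∈ {1,…,n} define F̂ᵢ(z) = max over A ∈ 𝒜 with i ∈ A of the min over A' ∈ 𝒜 with A' ⊊ A of (1/#(A∖A')) Σ_{j ∈ A∖A'} 1{yⱼ ≤ z}. Then for every i, the function z ↦ F̂ᵢ(z) is a valid cumulative distribution function: it takes values in [0,1], is nondecreasing, is right-continuous, and satisfies F̂ᵢ(z) → 0 as z → −∞ and F̂ᵢ(z) → 1 as z → +∞. -/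

import Mathlib

open Filter

variable {X : Type*} [PartialOrder X] {n : ℕ}

/-- `A ⊆ {1,…,n}` is an admissible upper set for the covariates `x`:
`i ∈ A` and `xᵢ ≼ xⱼ` imply `j ∈ A`. -/
def IsAdmissible (x : Fin n → X) (A : Finset (Fin n)) : Prop :=
  ∀ i ∈ A, ∀ j : Fin n, x i ≤ x j → j ∈ A

open scoped Classical in
/-- The admissible upper sets containing a given index `i`. -/
noncomputable def upperSetsContaining (x : Fin n → X) (i : Fin n) : Finset (Finset (Fin n)) :=
  Finset.univ.filter fun A => IsAdmissible x A ∧ i ∈ A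

open scoped Classical in
/-- The admissible upper sets that are proper subsets of `A`. -/
noncomputable def properUpperSubsets (x : Fin n → X) (A : Finset (Fin n)) :
    Finset (Finset (Fin n)) :=
  Finset.univ.filter fun A' => IsAdmissible x A' ∧ A' ⊂ A

lemma upperSetsContaining_nonempty (x : Fin n → X) (i : Fin n) :
    (upperSetsContaining x i).Nonempty :=
  ⟨Finset.univ, by
    simp only [upperSetsContaining, Finset.mem_filter]; simp [IsAdmissible]⟩

/-- The average `(1/#B) Σ_{j ∈ B} 1{yⱼ ≤ z}`. -/
noncomputable def indicatorAvg (y : Fin n → ℝ) (B : Finset (Fin n)) (z : ℝ) : ℝ :=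
  (∑ j ∈ B, if y j ≤ z then (1 : ℝ) else 0) / (B.card : ℝ)

/-- The max–min formula
`F̂ᵢ(z) = max_{A ∋ i admissible} min_{A' ⊊ A admissible} (1/#(A∖A')) Σ_{j ∈ A∖A'} 1{yⱼ ≤ z}`. -/
noncomputable def Fhat (x : Fin n → X) (y : Fin n → ℝ) (i : Fin n) (z : ℝ) : ℝ :=
  (upperSetsContaining x i).sup' (upperSetsContaining_nonempty x i) fun A =>
    if h : (properUpperSubsets x A).Nonempty then
      (properUpperSubsets x A).inf' h fun A' => indicatorAvg y (A \ A') z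
    else 0



lemma properUpperSubsets_nonempty (x : Fin n → X) {A : Finset (Fin n)} (hA : A.Nonempty) :
    (properUpperSubsets x A).Nonempty :=
  ⟨∅, by simp only [properUpperSubsets, Finset.mem_filter]; simp [IsAdmissible, Finset.empty_ssubset, hA]⟩

lemma mem_upperSetsContaining_nonempty {x : Fin n → X} {i : Fin n} {A : Finset (Fin n)}
    (h : A ∈ upperSetsContaining x i) : A.Nonempty := by
  classical
  simp only [upperSetsContaining, Finset.mem_filter] at h
  exact ⟨i, h.2.2⟩

lemma mem_properUpperSubsets_ssubset {x : Fin n → X} {A A' : Finset (Fin n)}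
    (h : A' ∈ properUpperSubsets x A) : A' ⊂ A := by
  classical
  simp only [properUpperSubsets, Finset.mem_filter] at h
  exact h.2.2

lemma indicatorAvg_nonneg (y : Fin n → ℝ) (B : Finset (Fin n)) (z : ℝ) :
    0 ≤ indicatorAvg y B z := by
  apply div_nonneg _ (Nat.cast_nonneg _)
  apply Finset.sum_nonneg
  intro j _; split <;> norm_num

lemma indicatorAvg_le_one (y : Fin n → ℝ) (B : Finset (Fin n)) (z : ℝ) :
    indicatorAvg y B z ≤ 1 := by
  rcases B.eq_empty_or_nonempty with h | h
  · simp [indicatorAvg, h]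
  · rw [indicatorAvg, div_le_one (by exact_mod_cast Finset.card_pos.2 h)]
    calc (∑ j ∈ B, if y j ≤ z then (1:ℝ) else 0) ≤ ∑ j ∈ B, 1 := by
          apply Finset.sum_le_sum; intro j _; split <;> norm_num
      _ = B.card := by simp

lemma indicatorAvg_mono (y : Fin n → ℝ) (B : Finset (Fin n)) {z₁ z₂ : ℝ} (h : z₁ ≤ z₂) :
    indicatorAvg y B z₁ ≤ indicatorAvg y B z₂ := by
  rcases B.eq_empty_or_nonempty with hB | hB
  · simp [indicatorAvg, hB]
  · apply div_le_div_of_nonneg_right ?_ (Nat.cast_nonneg _)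
    apply Finset.sum_le_sum
    intro j _
    split
    · rw [if_pos (le_trans (by assumption) h)]
    · split <;> norm_num

lemma indicatorAvg_of_all_le {y : Fin n → ℝ} {B : Finset (Fin n)} {z : ℝ}
    (hB : B.Nonempty) (h : ∀ j, y j ≤ z) : indicatorAvg y B z = 1 := by
  have : (∑ j ∈ B, if y j ≤ z then (1:ℝ) else 0) = B.card := by
    rw [Finset.sum_congr rfl (fun j _ => if_pos (h j))]; simp
  rw [indicatorAvg, this, div_self (by exact_mod_cast (Finset.card_pos.2 hB).ne')]

lemma indicatorAvg_of_all_gt {y : Fin n → ℝ} {B : Finset (Fin n)} {z : ℝ}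
    (h : ∀ j, z < y j) : indicatorAvg y B z = 0 := by
  have : (∑ j ∈ B, if y j ≤ z then (1:ℝ) else 0) = 0 := by
    apply Finset.sum_eq_zero; intro j _; rw [if_neg (not_le.2 (h j))]
  rw [indicatorAvg, this, zero_div]

lemma Fhat_nonneg (x : Fin n → X) (y : Fin n → ℝ) (i : Fin n) (z : ℝ) :
    0 ≤ Fhat x y i z := by
  obtain ⟨A, hA⟩ := upperSetsContaining_nonempty x i
  refine le_trans ?_ (Finset.le_sup' _ hA)
  split
  · apply Finset.le_inf'
    intro A' _
    exact indicatorAvg_nonneg y _ z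
  · exact le_refl 0

lemma Fhat_le_one (x : Fin n → X) (y : Fin n → ℝ) (i : Fin n) (z : ℝ) :
    Fhat x y i z ≤ 1 := by
  apply Finset.sup'_le
  intro A hA
  split
  next h =>
    obtain ⟨A', hA'⟩ := h
    exact le_trans (Finset.inf'_le _ hA') (indicatorAvg_le_one y _ z)
  next => norm_num

lemma Fhat_mono (x : Fin n → X) (y : Fin n → ℝ) (i : Fin n) : Monotone (Fhat x y i) := by
  intro z₁ z₂ h
  apply Finset.sup'_le
  intro A hA
  refine le_trans ?_ (Finset.le_sup' _ hA)
  split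
  next hne =>
    apply Finset.le_inf'
    intro A' hA'
    exact le_trans (Finset.inf'_le _ hA') (indicatorAvg_mono y _ h)
  next hne => exact le_refl 0

lemma Fhat_congr (x : Fin n → X) (y : Fin n → ℝ) (i : Fin n) {z z' : ℝ}
    (h : ∀ j, y j ≤ z' ↔ y j ≤ z) : Fhat x y i z' = Fhat x y i z := by
  have : ∀ B : Finset (Fin n), indicatorAvg y B z' = indicatorAvg y B z := by
    intro B
    unfold indicatorAvg
    congr 1
    exact Finset.sum_congr rfl (fun j _ => by simp [h j])
  simp only [Fhat, this]

lemma exists_delta (y : Fin n → ℝ) (z : ℝ) :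
    ∃ δ > 0, ∀ z' ∈ Set.Ico z (z + δ), ∀ j, y j ≤ z' ↔ y j ≤ z := by
  classical
  set S := Finset.univ.filter (fun j => z < y j) with hS
  by_cases h : S.Nonempty
  · refine ⟨S.inf' h y - z, ?_, ?_⟩
    · have : z < S.inf' h y := by
        rw [Finset.lt_inf'_iff]
        intro j hj
        exact (Finset.mem_filter.1 hj).2
      linarith
    · rintro z' ⟨hz1, hz2⟩ j
      constructor
      · intro hj
        by_contra hc
        have hjS : j ∈ S := Finset.mem_filter.2 ⟨Finset.mem_univ j, not_le.1 hc⟩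
        have := Finset.inf'_le y hjS
        linarith
      · intro hj; linarith
  · refine ⟨1, one_pos, ?_⟩
    rintro z' ⟨hz1, _⟩ j
    have : y j ≤ z := by
      by_contra hc
      exact h ⟨j, Finset.mem_filter.2 ⟨Finset.mem_univ j, not_le.1 hc⟩⟩
    exact ⟨fun _ => this, fun h' => h'.trans hz1⟩

lemma Fhat_eq_zero (x : Fin n → X) (y : Fin n → ℝ) (i : Fin n) {z : ℝ}
    (h : ∀ j, z < y j) : Fhat x y i z = 0 := by
  have h1 : Fhat x y i z ≤ 0 := by
    apply Finset.sup'_le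
    intro A hA
    split
    next hne =>
      obtain ⟨A', hA'⟩ := hne
      refine le_trans (Finset.inf'_le _ hA') ?_
      rw [indicatorAvg_of_all_gt h]
    next => exact le_refl 0
  exact le_antisymm h1 (Fhat_nonneg x y i z)

lemma Fhat_eq_one (x : Fin n → X) (y : Fin n → ℝ) (i : Fin n) {z : ℝ}
    (h : ∀ j, y j ≤ z) : Fhat x y i z = 1 := by
  have h1 : (1:ℝ) ≤ Fhat x y i z := by
    obtain ⟨A, hA⟩ := upperSetsContaining_nonempty x i
    refine le_trans ?_ (Finset.le_sup' _ hA)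
    rw [dif_pos (properUpperSubsets_nonempty x (mem_upperSetsContaining_nonempty hA))]
    apply Finset.le_inf'
    intro A' hA'
    have hss := mem_properUpperSubsets_ssubset hA'
    have hne : (A \ A').Nonempty := by
      rw [Finset.sdiff_nonempty]
      exact fun hsub => (hss.2 hsub).elim
    rw [indicatorAvg_of_all_le hne h]
  exact le_antisymm (Fhat_le_one x y i z) h1

/-- For each `i`, the max–min formula defines a valid cumulative distribution
function: values in `[0,1]`, nondecreasing, right-continuous, with limit `0`
at `−∞` and `1` at `+∞`. -/
theorem Fhat_isCDF (x : Fin n → X) (y : Fin n → ℝ) (i : Fin n) :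
    (∀ z : ℝ, Fhat x y i z ∈ Set.Icc (0 : ℝ) 1) ∧
    Monotone (Fhat x y i) ∧
    (∀ z : ℝ, ContinuousWithinAt (Fhat x y i) (Set.Ici z) z) ∧
    Tendsto (Fhat x y i) atBot (nhds 0) ∧
    Tendsto (Fhat x y i) atTop (nhds 1) := by
  refine ⟨fun z => ⟨Fhat_nonneg x y i z, Fhat_le_one x y i z⟩, Fhat_mono x y i, ?_, ?_, ?_⟩
  · intro z
    obtain ⟨δ, hδ, hδ'⟩ := exists_delta y z
    have hev : (fun z' => Fhat x y i z') =ᶠ[nhdsWithin z (Set.Ici z)] fun _ => Fhat x y i z := by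
      filter_upwards [Ico_mem_nhdsGE_of_mem (⟨le_refl z, by linarith⟩ :
        z ∈ Set.Ico z (z + δ))] with z' hz'
      exact Fhat_congr x y i (hδ' z' hz')
    exact Tendsto.congr' hev.symm tendsto_const_nhds
  · have hev : (fun z => Fhat x y i z) =ᶠ[atBot] fun _ => (0:ℝ) := by
      filter_upwards [eventually_lt_atBot (Finset.univ.inf' ⟨i, Finset.mem_univ i⟩ y)] with z hz
      exact Fhat_eq_zero x y i (fun j => lt_of_lt_of_le hz (Finset.inf'_le y (Finset.mem_univ j)))
    exact Tendsto.congr' hev.symm tendsto_const_nhds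
  · have hev : (fun z => Fhat x y i z) =ᶠ[atTop] fun _ => (1:ℝ) := by
      filter_upwards [eventually_ge_atTop (Finset.univ.sup' ⟨i, Finset.mem_univ i⟩ y)] with z hz
      exact Fhat_eq_one x y i (fun j => le_trans (Finset.le_sup' y (Finset.mem_univ j)) hz)
    exact Tendsto.congr' hev.symm tendsto_const_nhds
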